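/- Let r > 0, let δ ∈ (0, π/3], and let v, e ∈ ℝ² with ℓ(v, e) ≥ 2r. Let u ∈ ℝ² satisfy ℓ(v, u) = 2r·cos(δ/2) and ∠(u, v, e) ≤ δ/2. Suppose a is a point of the anchor region closedBall(v, r) ∩ closedBall(u, r). Then every point x ∈ closedBall(v, r) with x ≠ v and ℓ(x, e) ≤ ℓ(a, e) satisfies ∠(x, v, e) ≤ δ. -/

import Mathlib

open Real EuclideanGeometry Metric
open scoped RealInnerProductSpace

set_option maxHeartbeats 1000000 in
theorem stmt_1 (r δ : ℝ) (hr : 0 < r) (hδ : δ ∈ Set.Ioc 0 (π / 3))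
    (v e u a : EuclideanSpace ℝ (Fin 2))
    (hve : 2 * r ≤ dist v e)
    (hu : dist v u = 2 * r * Real.cos (δ / 2))
    (hangle : EuclideanGeometry.angle u v e ≤ δ / 2)
    (ha : a ∈ Metric.closedBall v r ∩ Metric.closedBall u r)
    (x : EuclideanSpace ℝ (Fin 2)) (hx : x ∈ Metric.closedBall v r)
    (hxv : x ≠ v) (hclose : dist x e ≤ dist a e) :
    EuclideanGeometry.angle x v e ≤ δ := by
  obtain ⟨hδ0, hδπ⟩ := hδ
  obtain ⟨hav, hau⟩ := ha
  have hπ : (0:ℝ) < π := Real.pi_pos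
  set L : ℝ := dist v e with hL
  have hL2r : 2 * r ≤ L := hve
  have hLpos : 0 < L := by linarith
  set c : ℝ := Real.cos (δ / 2) with hc
  have hcpos : 0 < c := Real.cos_pos_of_mem_Ioo ⟨by linarith, by linarith⟩
  have hcosδ : Real.cos δ = 2 * c ^ 2 - 1 := by
    have : δ = 2 * (δ / 2) := by ring
    rw [this, Real.cos_two_mul]
  have hcosδhalf : (1:ℝ) / 2 ≤ Real.cos δ := by
    have := Real.cos_le_cos_of_nonneg_of_le_pi (by linarith : (0:ℝ) ≤ δ)
      (by linarith : δ ≤ π) (le_refl δ)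
    have h3 : Real.cos (π / 3) = 1 / 2 := Real.cos_pi_div_three
    calc (1:ℝ)/2 = Real.cos (π/3) := h3.symm
    _ ≤ Real.cos δ := Real.cos_le_cos_of_nonneg_of_le_pi (by linarith) (by linarith) hδπ
  -- vectors
  have hev : e ≠ v := by
    intro h
    have hL0 : L = 0 := by rw [hL, h, dist_self]
    linarith
  have huv : u ≠ v := by
    intro h
    have : dist v u = 0 := by rw [h, dist_self]
    rw [hu] at this; nlinarith
  have hnev : ‖e - v‖ = L := by rw [hL, dist_comm, dist_eq_norm]
  have hnuv : ‖u - v‖ = 2 * r * c := by rw [← dist_eq_norm, ← dist_comm v u, hu]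
  -- inner product with u direction
  have hcosang : Real.cos (EuclideanGeometry.angle u v e) =
      ⟪u - v, e - v⟫ / (‖u - v‖ * ‖e - v‖) := by
    rw [EuclideanGeometry.angle, InnerProductGeometry.cos_angle, vsub_eq_sub, vsub_eq_sub]
  have hcosge : c ≤ Real.cos (EuclideanGeometry.angle u v e) :=
    Real.cos_le_cos_of_nonneg_of_le_pi (EuclideanGeometry.angle_nonneg u v e)
      (by linarith) hangle
  have hinner_uv : 2 * r * c * L * c ≤ ⟪u - v, e - v⟫ := by
    have hne : ‖u - v‖ * ‖e - v‖ = 2 * r * c * L := by rw [hnuv, hnev]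
    have hpos : (0:ℝ) < 2 * r * c * L := by positivity
    rw [hcosang, hne] at hcosge
    calc 2 * r * c * L * c = (2 * r * c * L) * c := by ring
    _ ≤ (2 * r * c * L) * (⟪u - v, e - v⟫ / (2 * r * c * L)) := by
        exact mul_le_mul_of_nonneg_left hcosge (le_of_lt hpos)
    _ = ⟪u - v, e - v⟫ := by field_simp
  -- Cauchy-Schwarz for a - u
  have hau' : ‖a - u‖ ≤ r := by rwa [← dist_eq_norm, ← Metric.mem_closedBall]
  have hinner_au : -(r * L) ≤ ⟪a - u, e - v⟫ := by
    have h1 : |⟪a - u, e - v⟫| ≤ ‖a - u‖ * ‖e - v‖ := abs_real_inner_le_norm _ _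
    have h2 : ‖a - u‖ * ‖e - v‖ ≤ r * L := by
      rw [hnev]; exact mul_le_mul_of_nonneg_right hau' (le_of_lt hLpos)
    have := neg_abs_le (⟪a - u, e - v⟫)
    linarith [abs_nonneg (⟪a - u, e - v⟫)]
  -- key inner product bound
  have hkey : r * L * Real.cos δ ≤ ⟪a - v, e - v⟫ := by
    have hsplit : (⟪a - v, e - v⟫) = ⟪u - v, e - v⟫ + ⟪a - u, e - v⟫ := by
      rw [← inner_add_left]; congr 1; abel
    rw [hsplit, hcosδ]; nlinarith
  -- distance expansion for a
  have hav' : ‖a - v‖ ≤ r := by rwa [← dist_eq_norm, ← Metric.mem_closedBall]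
  have hexp : ∀ p : EuclideanSpace ℝ (Fin 2),
      dist p e ^ 2 = ‖p - v‖ ^ 2 - 2 * ⟪p - v, e - v⟫ + L ^ 2 := by
    intro p
    have : p - e = (p - v) - (e - v) := by abel
    rw [dist_eq_norm, this, norm_sub_sq_real, hnev]
  have hae : dist a e ^ 2 ≤ L ^ 2 + r ^ 2 - 2 * L * r * Real.cos δ := by
    have h1 := hexp a
    nlinarith [norm_nonneg (a - v)]
  -- x side
  set dx : ℝ := ‖x - v‖ with hdx
  have hdxpos : 0 < dx := by
    rw [hdx, norm_pos_iff]; exact sub_ne_zero_of_ne hxv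
  have hdxr : dx ≤ r := by rw [hdx, ← dist_eq_norm, ← Metric.mem_closedBall]; exact hx
  set θ : ℝ := EuclideanGeometry.angle x v e with hθ
  have hinner_x : ⟪x - v, e - v⟫ = dx * L * Real.cos θ := by
    have h := InnerProductGeometry.cos_angle (x - v) (e - v)
    have : θ = InnerProductGeometry.angle (x - v) (e - v) := by
      rw [hθ, EuclideanGeometry.angle, vsub_eq_sub, vsub_eq_sub]
    rw [this, h, hnev]
    field_simp
    rw [← hdx, mul_div_assoc, div_self (ne_of_gt hdxpos), mul_one]
  -- combine
  by_contra hcon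
  push_neg at hcon
  have hθπ : θ ≤ π := EuclideanGeometry.angle_le_pi x v e
  have hcoslt : Real.cos θ < Real.cos δ :=
    Real.cos_lt_cos_of_nonneg_of_le_pi (by linarith) hθπ hcon
  have hxe : dist x e ^ 2 = dx ^ 2 - 2 * (dx * L * Real.cos θ) + L ^ 2 := by
    rw [hexp x, hinner_x]
  have hsq : dist x e ^ 2 ≤ dist a e ^ 2 := by
    exact pow_le_pow_left₀ dist_nonneg hclose 2
  have h1 : dx ^ 2 - 2 * (dx * L * Real.cos θ) ≤ r ^ 2 - 2 * L * r * Real.cos δ := by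
    rw [hxe] at hsq; linarith [hae]
  have h2 : dx * L * Real.cos θ < dx * L * Real.cos δ := by
    have := mul_lt_mul_of_pos_left hcoslt (mul_pos hdxpos hLpos)
    linarith
  have hfac : 0 ≤ (r - dx) * (2 * L * Real.cos δ - dx - r) := by
    apply mul_nonneg (by linarith)
    have h4 := mul_le_mul_of_nonneg_left hcosδhalf (le_of_lt hLpos)
    nlinarith [h4]
  have h3 : r ^ 2 - 2 * L * r * Real.cos δ ≤ dx ^ 2 - 2 * (dx * L * Real.cos δ) := by
    nlinarith [hfac]
  linarith
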